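/- Let A be an assembly with at least one non-conflicting realization, and let S_u(A) be the set of scaffolds that appear in A but whose orientation is not specified in any assembly point of A, in the setting where OG(A) is non-branching (every scaffold in at most two points) and every two points sharing a scaffold are non-conflicting or semi-conflicting. Then the number of non-conflicting realizations of A equals 2^{|S_u(A)|}. -/

import Mathlib

/-- An assembly point: two scaffolds with partial orientation data
(`none` = unoriented, `some b` = oriented, `true` = forward). -/
structure APoint (S : Type) where
  s1 : S
  s2 : S
  o1 : Option Bool
  o2 : Option Bool
deriving DecidableEq

/-- A global orientation `σ` extends (is consistent with) the partial data of `p`. -/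
def APoint.extends' {S : Type} (σ : S → Bool) (p : APoint S) : Prop :=
  (∀ b, p.o1 = some b → σ p.s1 = b) ∧ (∀ b, p.o2 = some b → σ p.s2 = b)

/-- The extremity of its left scaffold used by a point realized via `σ`
(head `(s, true)` if `s` is forward). -/
def APoint.usedL {S : Type} (σ : S → Bool) (p : APoint S) : S × Bool := (p.s1, σ p.s1)

/-- The extremity of its right scaffold used by a point realized via `σ`
(tail `(s, false)` if `s` is forward). -/
def APoint.usedR {S : Type} (σ : S → Bool) (p : APoint S) : S × Bool := (p.s2, !σ p.s2)

/-- Two realized points use disjoint sets of extremities (are non-conflicting). -/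
def APoint.disj {S : Type} (τ τ' : S → Bool) (p q : APoint S) : Prop :=
  p.usedL τ ≠ q.usedL τ' ∧ p.usedL τ ≠ q.usedR τ' ∧
  p.usedR τ ≠ q.usedL τ' ∧ p.usedR τ ≠ q.usedR τ'

/-- `σ` is a non-conflicting realization of the assembly `A`: it extends the partial
orientation data of every point, and every scaffold extremity is used at most once. -/
def NCR {S : Type} (A : Finset (APoint S)) (σ : S → Bool) : Prop :=
  (∀ p ∈ A, p.extends' σ) ∧
  (∀ p ∈ A, p.usedL σ ≠ p.usedR σ) ∧
  (∀ p ∈ A, ∀ q ∈ A, p ≠ q → APoint.disj σ σ p q)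

/-- If some `σ₀` is an NCR and `σ` extends every point of `A`, then `σ` is also an NCR
(the non-conflicting conditions are independent of the orientation). -/
lemma NCR.of_extends {S : Type} {A : Finset (APoint S)} {σ₀ σ : S → Bool}
    (h0 : NCR A σ₀) (hext : ∀ p ∈ A, p.extends' σ) : NCR A σ := by
  refine ⟨hext, ?_, ?_⟩
  · intro p hp h
    simp only [APoint.usedL, APoint.usedR, Prod.mk.injEq] at h
    obtain ⟨h1, h2⟩ := h
    rw [h1] at h2
    simp at h2
  · intro p hp q hq hpq
    obtain ⟨d1, d2, d3, d4⟩ := h0.2.2 p hp q hq hpq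
    refine ⟨?_, ?_, ?_, ?_⟩ <;> intro h <;>
      simp only [APoint.usedL, APoint.usedR, Prod.mk.injEq] at h <;>
      obtain ⟨h1, h2⟩ := h
    · exact d1 (by simp only [APoint.usedL]; rw [h1])
    · rw [h1] at h2; simp at h2
    · rw [h1] at h2; simp at h2
    · exact d4 (by simp only [APoint.usedR]; rw [h1])

/-- for an assembly `A` with at least one non-conflicting realization,
in the non-branching setting (every scaffold in at most two points), where every
scaffold occurs in some point of `A`, the number of non-conflicting realizations of `A`
equals `2 ^ |S_u(A)|`, where `S_u(A)` is the set of scaffolds whose orientation is not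
specified in any assembly point of `A` containing them. -/
theorem card_nonconflicting_realizations {S : Type} [Fintype S] [DecidableEq S]
    (A : Finset (APoint S))
    (hss : ∀ p ∈ A, p.s1 ≠ p.s2)
    (hall : ∀ s : S, ∃ p ∈ A, p.s1 = s ∨ p.s2 = s)
    (hdeg : ∀ s : S, (A.filter (fun p => p.s1 = s ∨ p.s2 = s)).card ≤ 2)
    (hex : ∃ σ : S → Bool, NCR A σ) :
    Nat.card {σ : S → Bool // NCR A σ} =
      2 ^ (Finset.univ.filter (fun s : S =>
        ∀ p ∈ A, (p.s1 = s → p.o1 = none) ∧ (p.s2 = s → p.o2 = none))).card := by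
  classical
  obtain ⟨σ₀, hσ₀⟩ := hex
  set Su : Finset S := Finset.univ.filter (fun s : S =>
    ∀ p ∈ A, (p.s1 = s → p.o1 = none) ∧ (p.s2 = s → p.o2 = none)) with hSu
  -- outside Su, the orientation is forced
  have forced : ∀ (σ : S → Bool), NCR A σ → ∀ s ∉ Su, σ s = σ₀ s := by
    intro σ hσ s hs
    rw [hSu, Finset.mem_filter] at hs
    push_neg at hs
    obtain ⟨p, hp, hps⟩ := hs (Finset.mem_univ s)
    by_cases h1 : p.s1 = s ∧ p.o1 ≠ none
    · obtain ⟨hps1, ho1⟩ := h1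
      obtain ⟨b, hb⟩ := Option.ne_none_iff_exists'.mp ho1
      have e1 := (hσ.1 p hp).1 b hb
      have e2 := (hσ₀.1 p hp).1 b hb
      rw [hps1] at e1 e2
      rw [e1, e2]
    · have h2 : p.s2 = s ∧ p.o2 ≠ none := by tauto
      obtain ⟨hps2, ho2⟩ := h2
      obtain ⟨b, hb⟩ := Option.ne_none_iff_exists'.mp ho2
      have e1 := (hσ.1 p hp).2 b hb
      have e2 := (hσ₀.1 p hp).2 b hb
      rw [hps2] at e1 e2
      rw [e1, e2]
  -- the patched function is an NCR
  have patch : ∀ f : {s : S // s ∈ Su} → Bool,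
      NCR A (fun s => if h : s ∈ Su then f ⟨s, h⟩ else σ₀ s) := by
    intro f
    refine NCR.of_extends hσ₀ ?_
    intro p hp
    constructor
    · intro b hb
      have hns : p.s1 ∉ Su := by
        rw [hSu, Finset.mem_filter]
        rintro ⟨-, h⟩
        have := (h p hp).1 rfl
        rw [hb] at this
        exact Option.some_ne_none b this
      simp only [dif_neg hns]
      exact (hσ₀.1 p hp).1 b hb
    · intro b hb
      have hns : p.s2 ∉ Su := by
        rw [hSu, Finset.mem_filter]
        rintro ⟨-, h⟩
        have := (h p hp).2 rfl
        rw [hb] at this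
        exact Option.some_ne_none b this
      simp only [dif_neg hns]
      exact (hσ₀.1 p hp).2 b hb
  have e : {σ : S → Bool // NCR A σ} ≃ ({s : S // s ∈ Su} → Bool) :=
    { toFun := fun σ s => σ.1 s.1
      invFun := fun f => ⟨fun s => if h : s ∈ Su then f ⟨s, h⟩ else σ₀ s, patch f⟩
      left_inv := by
        rintro ⟨σ, hσ⟩
        ext s
        by_cases h : s ∈ Su
        · simp [dif_pos h]
        · simp only [dif_neg h]
          exact (forced σ hσ s h).symm
      right_inv := by
        intro f
        funext s
        simp [dif_pos s.2] }
  rw [Nat.card_congr e, Nat.card_fun, Nat.card_eq_fintype_card, Nat.card_eq_fintype_card,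
    Fintype.card_bool, Fintype.card_coe]
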